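/- Let C : Fin d → Fin d → Fin d → ℝ (written C^{μν}_λ := C μ ν λ) be antisymmetric in its two upper indices, i.e. C^{μν}_λ = −C^{νμ}_λ. Let A : Fin d → ℝ and let Â be the d×d matrix with entries Â^μ_ν := Σ_σ C^{σμ}_ν·A_σ (μ the row index, ν the column index). Assume ‖Â‖ < 2π and that γ_u(−Â) is invertible, and set ρ_u := (γ_u(−Â))⁻¹. Then (det(γ_u(Â)·ρ_u))⁻¹ = exp(Σ_{μ,σ} C^{μσ}_μ·A_σ). -/

import Mathlib

open scoped Matrix

attribute [local instance] Matrix.linftyOpNormedRing Matrix.linftyOpNormedAlgebra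

/-- The universal matrix `γ_u(X) := ∑_{k=0}^∞ (B'_k/k!)·X^k`, with `B'_k` the Bernoulli
numbers with convention `B'_1 = +1/2`. -/
noncomputable def gammaU {d : ℕ} (X : Matrix (Fin d) (Fin d) ℝ) : Matrix (Fin d) (Fin d) ℝ :=
  ∑' k : ℕ, ((bernoulli' k : ℝ) / (Nat.factorial k : ℝ)) • X ^ k

variable {d : ℕ}

noncomputable def entryCLM (i j : Fin d) : Matrix (Fin d) (Fin d) ℝ →L[ℝ] ℝ :=
  LinearMap.mkContinuous
    { toFun := fun M => M i j
      map_add' := fun _ _ => rfl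
      map_smul' := fun _ _ => rfl } 1 (by
    intro M
    rw [one_mul]
    have h1 : ‖M i j‖₊ ≤ ∑ j', ‖M i j'‖₊ :=
      Finset.single_le_sum (f := fun j' => ‖M i j'‖₊) (fun _ _ => zero_le) (Finset.mem_univ j)
    have h2 : (∑ j', ‖M i j'‖₊) ≤ ‖M‖₊ := by
      rw [Matrix.linfty_opNNNorm_def]
      exact Finset.le_sup (f := fun i => ∑ j', ‖M i j'‖₊) (Finset.mem_univ i)
    exact_mod_cast h1.trans h2)

theorem entry_hasDerivAt {f : ℝ → Matrix (Fin d) (Fin d) ℝ} {f' : Matrix (Fin d) (Fin d) ℝ}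
    {t : ℝ} (hf : HasDerivAt f f' t) (i j : Fin d) :
    HasDerivAt (fun u => f u i j) (f' i j) t :=
  ((entryCLM i j).hasFDerivAt.comp_hasDerivAt t hf : )

open NormedSpace in
theorem hasDerivAt_detexp_zero (M : Matrix (Fin d) (Fin d) ℝ) :
    HasDerivAt (fun t : ℝ => (exp (t • M)).det) M.trace 0 := by
  have hE : ∀ i j, HasDerivAt (fun t : ℝ => exp (t • M) i j) (M i j) (0:ℝ) := by
    intro i j
    have h := hasDerivAt_exp_smul_const (𝕂 := ℝ) M (0 : ℝ)
    rw [zero_smul, exp_zero, one_mul] at h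
    exact entry_hasDerivAt h i j
  have hprod : ∀ σ : Equiv.Perm (Fin d),
      HasDerivAt (fun t : ℝ => ∏ i, exp (t • M) (σ i) i)
        (∑ i, (∏ j ∈ Finset.univ.erase i, exp ((0:ℝ) • M) (σ j) j) • M (σ i) i) (0:ℝ) :=
    fun σ => HasDerivAt.fun_finsetProd (fun i _ => hE (σ i) i)
  have key : HasDerivAt (fun t : ℝ => (exp (t • M)).det)
      (∑ σ : Equiv.Perm (Fin d), (Equiv.Perm.sign σ : ℝ) *
        ∑ i, (∏ j ∈ Finset.univ.erase i, exp ((0:ℝ) • M) (σ j) j) • M (σ i) i) (0:ℝ) := by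
    have := HasDerivAt.sum (u := Finset.univ) (fun σ _ => ((hprod σ).const_mul
      ((Equiv.Perm.sign σ : ℝ))))
    convert this using 2 with t
    · rfl
    · rfl
    · rw [Matrix.det_apply', Finset.sum_apply]
  convert key using 1
  rw [zero_smul, exp_zero]
  rw [Finset.sum_eq_single 1]
  · have h1 : ∀ x : Fin d, (∏ j ∈ Finset.univ.erase x,
        (1 : Matrix (Fin d) (Fin d) ℝ) ((1 : Equiv.Perm (Fin d)) j) j) = 1 :=
      fun x => Finset.prod_eq_one (fun j _ => by rw [Equiv.Perm.one_apply, Matrix.one_apply_eq])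
    simp [h1, Matrix.trace]
  · intro σ _ hσ
    have hz : ∀ i : Fin d, (∏ j ∈ Finset.univ.erase i, (1 : Matrix (Fin d) (Fin d) ℝ) (σ j) j)
        = 0 := by
      intro i
      have : ∃ j ∈ Finset.univ.erase i, σ j ≠ j := by
        by_contra hall
        push_neg at hall
        apply hσ
        apply Equiv.ext
        intro x
        show σ x = x
        by_cases hx : x = i
        · subst hx
          by_contra hxi
          have h2 : σ (σ x) = σ x := by
            rcases eq_or_ne (σ x) x with h | h
            · exact absurd h hxi
            · exact hall (σ x) (Finset.mem_erase.2 ⟨hxi, Finset.mem_univ _⟩)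
          exact hxi (σ.injective h2)
        · exact hall x (Finset.mem_erase.2 ⟨hx, Finset.mem_univ _⟩)
      obtain ⟨k, hk, hkne⟩ := this
      exact Finset.prod_eq_zero hk (Matrix.one_apply_ne hkne)
    simp [hz]
  · simp

open NormedSpace in
theorem det_exp (M : Matrix (Fin d) (Fin d) ℝ) :
    (exp M).det = Real.exp M.trace := by
  set g : ℝ → ℝ := fun t => (exp (t • M)).det with hg
  have hgmul : ∀ s t : ℝ, g (s + t) = g s * g t := by
    intro s t
    simp only [hg, add_smul]
    rw [Matrix.exp_add_of_commute _ _ (((Commute.refl M).smul_left s).smul_right t), Matrix.det_mul]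
  have hg0 : g 0 = 1 := by simp [hg]
  have hgd : ∀ t : ℝ, HasDerivAt g (g t * M.trace) t := by
    intro t
    have comp : HasDerivAt (fun u : ℝ => g (u - t)) M.trace t := by
      have h1 : HasDerivAt (fun u : ℝ => u - t) 1 t := (hasDerivAt_id t).sub_const t
      have h0 : HasDerivAt (fun u : ℝ => (exp (u • M)).det) M.trace (t - t) := by
        rw [sub_self]; exact hasDerivAt_detexp_zero M
      have := HasDerivAt.comp (x := t) (h := fun u : ℝ => u - t) (h₂ := fun u : ℝ => (exp (u • M)).det) h0 h1
      rw [mul_one] at this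
      exact this
    have : HasDerivAt (fun u : ℝ => g t * g (u - t)) (g t * M.trace) t := comp.const_mul (g t)
    convert this using 1
    funext u
    rw [← hgmul t (u - t)]
    ring_nf
  have hconst : ∀ t : ℝ, g t * Real.exp (-(M.trace * t)) = 1 := by
    have hd : ∀ t : ℝ, HasDerivAt (fun t => g t * Real.exp (-(M.trace * t))) 0 t := by
      intro t
      have he : HasDerivAt (fun t : ℝ => Real.exp (-(M.trace * t)))
          (Real.exp (-(M.trace * t)) * (-M.trace)) t := by
        have : HasDerivAt (fun t : ℝ => -(M.trace * t)) (-M.trace) t := by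
          have h := ((hasDerivAt_id t).const_mul M.trace).neg
          rw [mul_one] at h
          exact h
        exact (Real.hasDerivAt_exp _).comp t this
      have := (hgd t).mul he
      convert this using 1
      · rfl
      · rfl
      · rfl
      · ring
    intro t
    have := is_const_of_deriv_eq_zero (fun x => (hd x).differentiableAt)
      (fun x => (hd x).deriv) t 0
    rw [this]
    simp [hg0]
  have h1 := hconst 1
  rw [mul_one] at h1
  have : g 1 = Real.exp (M.trace) := by
    have he : Real.exp (-M.trace) ≠ 0 := Real.exp_ne_zero _
    rw [Real.exp_neg, mul_inv_eq_one₀ (Real.exp_ne_zero _)] at h1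
    linarith [h1]
  simpa [hg] using this

open Finset in
theorem sum_bern (n : ℕ) : ∑ j ∈ range (n+1), (n.choose j : ℚ) * bernoulli j = bernoulli' n := by
  rw [Finset.sum_range_succ, sum_bernoulli, Nat.choose_self]
  rcases eq_or_ne n 1 with rfl | h
  · norm_num [bernoulli_one, bernoulli'_one]
  · simp [h, bernoulli_eq_bernoulli'_of_ne_one h]

open Finset in
theorem coeffQ (n : ℕ) : ∑ kl ∈ Finset.HasAntidiagonal.antidiagonal n, (Nat.factorial kl.1 : ℚ)⁻¹ * ((bernoulli kl.2 : ℚ) / (Nat.factorial kl.2 : ℚ))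
    = (bernoulli' n : ℚ) / (Nat.factorial n : ℚ) := by
  rw [← Finset.HasAntidiagonal.map_swap_antidiagonal, Finset.sum_map]
  simp only [Function.Embedding.coeFn_mk, Prod.fst_swap, Prod.snd_swap]
  rw [Finset.Nat.sum_antidiagonal_eq_sum_range_succ (fun i j => ((Nat.factorial j : ℚ))⁻¹ * (bernoulli i / (Nat.factorial i : ℚ)))]
  rw [← sum_bern n, Finset.sum_div]
  refine Finset.sum_congr rfl fun k hk => ?_
  have hkn : k ≤ n := Nat.lt_succ_iff.mp (Finset.mem_range.mp hk)
  have hfact : (n.choose k : ℚ) * (Nat.factorial k * Nat.factorial (n-k)) = (Nat.factorial n : ℚ) := by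
    rw [← Nat.choose_mul_factorial_mul_factorial hkn]
    push_cast
    ring
  have h1 : ((Nat.factorial (n-k) : ℕ) : ℚ) ≠ 0 := Nat.cast_ne_zero.2 (Nat.factorial_ne_zero _)
  have h2 : ((Nat.factorial k : ℕ) : ℚ) ≠ 0 := Nat.cast_ne_zero.2 (Nat.factorial_ne_zero _)
  have h3 : ((Nat.factorial n : ℕ) : ℚ) ≠ 0 := Nat.cast_ne_zero.2 (Nat.factorial_ne_zero _)
  field_simp
  rw [← hfact]
  ring


open NormedSpace in
theorem gamma_exp (X : Matrix (Fin d) (Fin d) ℝ)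
    (hs : Summable fun k => ‖((bernoulli' k : ℝ) / (Nat.factorial k : ℝ)) • X ^ k‖) :
    gammaU X = exp X * gammaU (-X) := by
  set f : ℕ → Matrix (Fin d) (Fin d) ℝ :=
    fun k => ((bernoulli' k : ℝ) / (Nat.factorial k : ℝ)) • X ^ k with hf
  set g : ℕ → Matrix (Fin d) (Fin d) ℝ :=
    fun k => ((bernoulli k : ℝ) / (Nat.factorial k : ℝ)) • X ^ k with hgdef
  set e : ℕ → Matrix (Fin d) (Fin d) ℝ := fun k => ((Nat.factorial k : ℝ))⁻¹ • X ^ k with he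
  have hbb : ∀ k : ℕ, (bernoulli k : ℝ) = (-1 : ℝ) ^ k * (bernoulli' k : ℝ) := by
    intro k; rw [bernoulli]; push_cast; ring
  have hgf : ∀ k : ℕ, ((bernoulli' k : ℝ) / (Nat.factorial k : ℝ)) • (-X) ^ k = g k := by
    intro k
    rw [← neg_one_smul ℝ X, smul_pow, smul_smul, hgdef]
    simp only [hbb]
    ring_nf
  have hgX : gammaU (-X) = ∑' k, g k := tsum_congr hgf
  have hgnorm : Summable fun k => ‖g k‖ := by
    refine hs.congr fun k => ?_
    simp only [hgdef, norm_smul, hbb]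
    congr 1
    rw [Real.norm_eq_abs, Real.norm_eq_abs, abs_div, abs_div, abs_mul, abs_pow, abs_neg, abs_one,
      one_pow, one_mul]
  have henorm : Summable fun k => ‖e k‖ := norm_expSeries_summable' (𝕂 := ℝ) X
  have hmul := tsum_mul_tsum_eq_tsum_sum_antidiagonal_of_summable_norm henorm hgnorm
  have hexp : exp X = ∑' k, e k := by rw [exp_eq_tsum (𝕂 := ℝ)]
  rw [hgX, hexp]
  refine Eq.trans ?_ hmul.symm
  refine tsum_congr fun n => ?_
  have hterm : ∀ kl ∈ Finset.HasAntidiagonal.antidiagonal n, e kl.1 * g kl.2 =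
      ((Nat.factorial kl.1 : ℝ)⁻¹ * ((bernoulli kl.2 : ℝ) / (Nat.factorial kl.2 : ℝ))) • X ^ n := by
    intro kl hkl
    rw [he, hgdef]
    rw [smul_mul_smul_comm, ← pow_add, Finset.HasAntidiagonal.mem_antidiagonal.mp hkl]
  rw [Finset.sum_congr rfl hterm, ← Finset.sum_smul]
  congr 1
  have := coeffQ n
  have := congrArg (fun q : ℚ => (q : ℝ)) this
  push_cast at this
  rw [this]


open NormedSpace in
/-- Proposition 1 (universal realization): the integrating factor
`M_A = (det(γ_u(Â)·ρ_u(Â)))⁻¹` with `ρ_u = (γ_u(−Â))⁻¹` equals `exp(C^{μσ}_μ A_σ)`. -/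
theorem integrating_factor_universal {d : ℕ} (C : Fin d → Fin d → Fin d → ℝ)
    (hC : ∀ μ ν lam, C μ ν lam = - C ν μ lam)
    (A : Fin d → ℝ)
    (Ahat : Matrix (Fin d) (Fin d) ℝ)
    (hAhat : Ahat = Matrix.of fun μ ν => ∑ σ, C σ μ ν * A σ)
    (hnorm : ‖Ahat‖ < 2 * Real.pi)
    (hinv : IsUnit (gammaU (-Ahat)))
    (ρ : Matrix (Fin d) (Fin d) ℝ)
    (hρ : ρ = (gammaU (-Ahat))⁻¹) :
    ((gammaU Ahat * ρ).det)⁻¹ = Real.exp (∑ μ, ∑ σ, C μ σ μ * A σ) := by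
  have htrace : Ahat.trace = - ∑ μ, ∑ σ, C μ σ μ * A σ := by
    rw [hAhat]
    simp only [Matrix.trace, Matrix.diag_apply, Matrix.of_apply, ← Finset.sum_neg_distrib]
    refine Finset.sum_congr rfl fun μ _ => Finset.sum_congr rfl fun σ _ => ?_
    rw [hC σ μ μ]
    ring
  rcases Nat.eq_zero_or_pos d with hd | hd
  · subst hd
    have : (gammaU Ahat * ρ).det = 1 := Matrix.det_isEmpty
    rw [this]
    simp
  by_cases hs : Summable fun k => ‖((bernoulli' k : ℝ) / (Nat.factorial k : ℝ)) • Ahat ^ k‖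
  · have hgexp : gammaU Ahat = exp Ahat * gammaU (-Ahat) := gamma_exp Ahat hs
    have hdetu : IsUnit (gammaU (-Ahat)).det := (Matrix.isUnit_iff_isUnit_det _).1 hinv
    have hinv1 : gammaU (-Ahat) * ρ = 1 := by
      rw [hρ]; exact Matrix.mul_nonsing_inv _ hdetu
    have : gammaU Ahat * ρ = exp Ahat := by
      rw [hgexp, mul_assoc, hinv1, mul_one]
    rw [this, det_exp, htrace, ← Real.exp_neg, neg_neg]
  · exfalso
    have hs' : ¬ Summable fun k => ((bernoulli' k : ℝ) / (Nat.factorial k : ℝ)) • (-Ahat) ^ k := by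
      intro h
      apply hs
      have h2 : Summable fun k => ‖((bernoulli' k : ℝ) / (Nat.factorial k : ℝ)) • (-Ahat) ^ k‖ :=
        summable_norm_iff.2 h
      refine h2.congr fun k => ?_
      rw [← neg_one_smul ℝ Ahat, smul_pow, smul_smul, norm_smul, norm_smul]
      congr 1
      simp [Real.norm_eq_abs, abs_mul, abs_pow]
    have hzero : gammaU (-Ahat) = 0 := tsum_eq_zero_of_not_summable hs'
    rw [hzero, isUnit_zero_iff] at hinv
    have := congrFun (congrFun hinv ⟨0, hd⟩) ⟨0, hd⟩
    rw [Matrix.zero_apply, Matrix.one_apply_eq] at this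
    exact zero_ne_one this
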